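/- Let g(n) ≤ n^(1/β(n)) with g, β weakly increasing, β unbounded, β⁻¹ bounded by a primitive recursive function, and g primitive recursive. Then the function ν_g(k) = the least N such that every g-regressive coloring of [N]² has a min-homogeneous set of size k, is primitive recursive. -/

import Mathlib

/-- Floor of the real `t`-th root of `n`. -/
noncomputable def nroot (t n : ℕ) : ℕ := ⌊(n : ℝ) ^ ((t : ℝ)⁻¹)⌋₊

/-- `H` is min-homogeneous for the pair coloring `c`. -/
def MinHomog (c : ℕ → ℕ → ℕ) (H : Finset ℕ) : Prop :=
  ∀ m n n', m ∈ H → n ∈ H → n' ∈ H → m < n → m < n' → c m n = c m n'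

/-- `N →min (k)_g`: every `g`-regressive coloring of pairs below `N` has a
min-homogeneous set of size `k`. -/
def Good (g : ℕ → ℕ) (k N : ℕ) : Prop :=
  ∀ c : ℕ → ℕ → ℕ, (∀ m n, m < n → c m n ≤ g m) →
    ∃ H : Finset ℕ, H ⊆ Finset.range N ∧ H.card = k ∧ MinHomog c H

namespace Stmt5Aux

lemma good_mono {g : ℕ → ℕ} {k N N' : ℕ} (h : N ≤ N') (hG : Good g k N) : Good g k N' := by
  intro c hc
  obtain ⟨H, h1, h2, h3⟩ := hG c hc
  exact ⟨H, h1.trans (Finset.range_subset_range.2 h), h2, h3⟩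

lemma good_zero (g : ℕ → ℕ) (N : ℕ) : Good g 0 N := by
  intro c _
  exact ⟨∅, by simp, by simp, by intro m n n' hm; simp at hm⟩

lemma greedy (c : ℕ → ℕ → ℕ) (G : ℕ) :
    ∀ (k : ℕ) (S : Finset ℕ), (∀ x ∈ S, ∀ y, x < y → c x y ≤ G) →
      (G + 2) ^ k ≤ S.card → ∃ H, H ⊆ S ∧ H.card = k ∧ MinHomog c H := by
  intro k
  induction k with
  | zero =>
    intro S _ _
    exact ⟨∅, Finset.empty_subset _, by simp, by intro m n n' hm; simp at hm⟩
  | succ k ih =>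
    intro S hS hcard
    have hpos : 0 < S.card :=
      lt_of_lt_of_le (pow_pos (by omega) _) hcard
    have hne : S.Nonempty := Finset.card_pos.1 hpos
    set m := S.min' hne with hm
    have hmS : m ∈ S := S.min'_mem hne
    have hlt : ∀ x ∈ S.erase m, m < x := by
      intro x hx
      exact lt_of_le_of_ne (S.min'_le x (Finset.mem_of_mem_erase hx))
        (Ne.symm (Finset.ne_of_mem_erase hx))
    have maps : ∀ x ∈ S.erase m, c m x ∈ Finset.range (G + 1) := by
      intro x hx
      have := hS m hmS x (hlt x hx)
      simp only [Finset.mem_range]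
      omega
    have hone : 1 ≤ (G + 2) ^ k := Nat.one_le_pow _ _ (by omega)
    have hcard' : (Finset.range (G + 1)).card * (G + 2) ^ k ≤ (S.erase m).card := by
      rw [Finset.card_erase_of_mem hmS, Finset.card_range]
      have h2 : (G + 2) ^ (k + 1) = (G + 1) * (G + 2) ^ k + (G + 2) ^ k := by ring
      omega
    obtain ⟨v, _, hfib⟩ :=
      Finset.exists_le_card_fiber_of_mul_le_card_of_maps_to maps ⟨0, by simp⟩ hcard'
    set T := (S.erase m).filter (fun x => c m x = v) with hT
    have hTsub : T ⊆ S.erase m := Finset.filter_subset _ _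
    obtain ⟨H', hH'T, hcardH', hmh⟩ :=
      ih T (fun x hx y hxy => hS x (Finset.mem_of_mem_erase (hTsub hx)) y hxy) hfib
    have hH'm : ∀ x ∈ H', m < x := fun x hx => hlt x (hTsub (hH'T hx))
    have hmnot : m ∉ H' := fun hmem => lt_irrefl m (hH'm m hmem)
    refine ⟨insert m H', ?_, ?_, ?_⟩
    · intro x hx
      rcases Finset.mem_insert.1 hx with rfl | hx
      · exact hmS
      · exact Finset.mem_of_mem_erase (hTsub (hH'T hx))
    · rw [Finset.card_insert_of_notMem hmnot, hcardH']
    · intro a n n' ha hn hn' h1 h2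
      rcases Finset.mem_insert.1 ha with rfl | ha
      · have hn1 : n ∈ H' := by
          rcases Finset.mem_insert.1 hn with rfl | h; · omega
          · exact h
        have hn2 : n' ∈ H' := by
          rcases Finset.mem_insert.1 hn' with rfl | h; · omega
          · exact h
        have e1 : c m n = v := (Finset.mem_filter.1 (hH'T hn1)).2
        have e2 : c m n' = v := (Finset.mem_filter.1 (hH'T hn2)).2
        omega
      · have han : a < n := h1
        have hma : m < a := hH'm a ha
        have hn1 : n ∈ H' := by
          rcases Finset.mem_insert.1 hn with rfl | h; · omega
          · exact h
        have hn2 : n' ∈ H' := by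
          rcases Finset.mem_insert.1 hn' with rfl | h; · omega
          · exact h
        exact hmh a n n' ha hn1 hn2 h1 h2

lemma nroot_pow_le {t : ℕ} (ht : 1 ≤ t) (n : ℕ) : (nroot t n) ^ t ≤ n := by
  have hx : (0 : ℝ) ≤ (n : ℝ) ^ ((t : ℝ)⁻¹) := Real.rpow_nonneg (Nat.cast_nonneg n) _
  have h1 : ((nroot t n : ℕ) : ℝ) ≤ (n : ℝ) ^ ((t : ℝ)⁻¹) := Nat.floor_le hx
  have h2 : ((nroot t n : ℕ) : ℝ) ^ t ≤ ((n : ℝ) ^ ((t : ℝ)⁻¹)) ^ t :=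
    pow_le_pow_left₀ (Nat.cast_nonneg _) h1 t
  have ht0 : (t : ℝ) ≠ 0 := by positivity
  have h3 : ((n : ℝ) ^ ((t : ℝ)⁻¹)) ^ t = (n : ℝ) := by
    rw [← Real.rpow_natCast ((n : ℝ) ^ ((t : ℝ)⁻¹)) t, ← Real.rpow_mul (Nat.cast_nonneg n),
      inv_mul_cancel₀ ht0, Real.rpow_one]
  have h4 : ((nroot t n : ℕ) : ℝ) ^ t ≤ (n : ℝ) := h2.trans_eq h3
  exact_mod_cast h4

lemma nroot_anti {s t : ℕ} (hs : 1 ≤ s) (hst : s ≤ t) (n : ℕ) : nroot t n ≤ nroot s n := by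
  apply Nat.floor_le_floor
  rcases Nat.eq_zero_or_pos n with rfl | hn
  · rcases Nat.eq_zero_or_pos t with rfl | htpos
    · omega
    · rw [Nat.cast_zero, Real.zero_rpow (by positivity), Real.zero_rpow (by positivity)]
  · apply Real.rpow_le_rpow_of_exponent_le (by exact_mod_cast hn)
    have h1 : (0 : ℝ) < s := by exact_mod_cast hs
    have h2 : (s : ℝ) ≤ t := by exact_mod_cast hst
    exact inv_anti₀ h1 h2



lemma good_bound (g β : ℕ → ℕ) (hg : Monotone g) (hβ : Monotone β)
    (hgb : ∀ n, g n ≤ nroot (β n) n)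
    (p : ℕ → ℕ) (hpinv : ∀ t, ∃ n, n ≤ p t ∧ t ≤ β n) (k : ℕ) :
    Good g k ((p (2 * k) + 4 ^ k) ^ 2) := by
  rcases Nat.eq_zero_or_pos k with rfl | hk
  · exact good_zero g _
  set A := p (2 * k) + 4 ^ k with hA
  set N := A ^ 2 with hN
  obtain ⟨n₀, hn₀p, hn₀β⟩ := hpinv (2 * k)
  have h4k : 1 ≤ 4 ^ k := Nat.one_le_pow _ _ (by omega)
  have hA1 : 1 ≤ A := by omega
  have hNA : A ≤ N := by rw [hN, sq]; nlinarith
  have hn₀N : n₀ ≤ N := by omega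
  have hβN : 2 * k ≤ β N := hn₀β.trans (hβ hn₀N)
  have hGa : g N ≤ nroot (2 * k) N := (hgb N).trans (nroot_anti (by omega) hβN N)
  set a := nroot (2 * k) N with ha
  have hpow : a ^ (2 * k) ≤ N := nroot_pow_le (by omega) N
  have hak : a ^ k ≤ A := by
    by_contra h
    push_neg at h
    have h2 : A ^ 2 < (a ^ k) ^ 2 := by
      have := Nat.pow_lt_pow_left h (show 2 ≠ 0 by omega)
      exact this
    rw [← pow_mul] at h2
    rw [mul_comm k 2] at h2
    omega
  have hmax : (max a 1) ^ k ≤ A := by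
    rcases Nat.le_total a 1 with h | h
    · rw [max_eq_right h, one_pow]; exact hA1
    · rw [max_eq_left h]; exact hak
  have hG2 : (g N + 2) ^ k ≤ N := by
    have h1 : g N + 2 ≤ 4 * max a 1 := by
      rcases Nat.le_total a 1 with h | h
      · have : g N ≤ 1 := hGa.trans h
        rw [max_eq_right h]; omega
      · rw [max_eq_left h]; omega
    calc (g N + 2) ^ k ≤ (4 * max a 1) ^ k := Nat.pow_le_pow_left h1 k
      _ = 4 ^ k * (max a 1) ^ k := mul_pow _ _ _
      _ ≤ 4 ^ k * A := Nat.mul_le_mul_left _ hmax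
      _ ≤ A * A := Nat.mul_le_mul_right A (by omega)
      _ = N := (sq A).symm
  intro c hc
  obtain ⟨H, h1, h2, h3⟩ := greedy c (g N) k (Finset.range N)
    (fun x hx y hxy => (hc x y hxy).trans (hg (le_of_lt (Finset.mem_range.1 hx))))
    (by simpa using hG2)
  exact ⟨H, h1, h2, h3⟩

/-- little-endian base-`b` assembly of a digit list -/
def natOf (b : ℕ) : List ℕ → ℕ
  | [] => 0
  | a :: L => a + b * natOf b L

lemma natOf_lt {b : ℕ} (_hb : 1 ≤ b) : ∀ L : List ℕ, (∀ a ∈ L, a < b) →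
    natOf b L < b ^ L.length := by
  intro L
  induction L with
  | nil => intro _; simp [natOf]
  | cons a L ih =>
    intro h
    have ha : a < b := h a (by simp)
    have hL := ih (fun x hx => h x (by simp [hx]))
    have : a + b * natOf b L < b * (natOf b L + 1) := by ring_nf; omega
    calc natOf b (a :: L) = a + b * natOf b L := rfl
      _ < b * (natOf b L + 1) := this
      _ ≤ b * b ^ L.length := Nat.mul_le_mul_left _ (by omega)
      _ = b ^ (a :: L).length := by rw [List.length_cons, pow_succ']

lemma natOf_digit {b : ℕ} (hb : 1 ≤ b) : ∀ (L : List ℕ), (∀ a ∈ L, a < b) →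
    ∀ j, natOf b L / b ^ j % b = L.getD j 0 := by
  intro L
  induction L with
  | nil => intro _ j; simp [natOf]
  | cons a L ih =>
    intro h j
    have ha : a < b := h a (by simp)
    have hL : ∀ x ∈ L, x < b := fun x hx => h x (by simp [hx])
    cases j with
    | zero =>
      simp only [pow_zero, Nat.div_one, List.getD_cons_zero]
      show (a + b * natOf b L) % b = a
      rw [Nat.add_mul_mod_self_left, Nat.mod_eq_of_lt ha]
    | succ j =>
      have e1 : natOf b (a :: L) / b ^ (j + 1) = natOf b L / b ^ j := by
        show (a + b * natOf b L) / b ^ (j + 1) = natOf b L / b ^ j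
        rw [pow_succ', ← Nat.div_div_eq_div_mul, Nat.add_mul_div_left _ _ (by omega),
          Nat.div_eq_of_lt ha, Nat.zero_add]
      rw [e1, ih hL j, List.getD_cons_succ]

/-- decoded coloring from code `e`, truncated to be regressive -/
def colB (g : ℕ → ℕ) (N e m n : ℕ) : ℕ :=
  min (e / (g N + 1) ^ (m * N + n) % (g N + 1)) (g m)

/-- `i`-th element encoded in `h`, base `N` -/
def digB (N h i : ℕ) : ℕ := h / N ^ i % N

def chkB (g : ℕ → ℕ) (k N e h : ℕ) : Bool :=
  ((List.range k).all fun j => (List.range j).all fun i =>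
      decide (digB N h i < digB N h j)) &&
  ((List.range k).all fun j => (List.range k).all fun j' => (List.range k).all fun i =>
      decide (i < j → i < j' →
        colB g N e (digB N h i) (digB N h j) = colB g N e (digB N h i) (digB N h j')))

def PB (g : ℕ → ℕ) (k N : ℕ) : Bool :=
  (List.range ((g N + 1) ^ (N * N))).all fun e =>
    (List.range (N ^ k)).any fun h => chkB g k N e h

def cntB (g : ℕ → ℕ) (k : ℕ) : ℕ → ℕ
  | 0 => 0
  | M + 1 => cntB g k M + cond (PB g k M) 0 1

lemma PB_iff' (g : ℕ → ℕ) (k N : ℕ) : PB g k N = true ↔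
    ∀ e < (g N + 1) ^ (N * N), ∃ h < N ^ k,
      (∀ j < k, ∀ i < j, digB N h i < digB N h j) ∧
      (∀ j < k, ∀ j' < k, ∀ i < k, i < j → i < j' →
        colB g N e (digB N h i) (digB N h j) = colB g N e (digB N h i) (digB N h j')) := by
  simp only [PB, chkB, List.all_eq_true, List.any_eq_true, List.mem_range,
    Bool.and_eq_true, decide_eq_true_eq]

lemma PB_iff (g : ℕ → ℕ) (hg : Monotone g) (k N : ℕ) : PB g k N = true ↔ Good g k N := by
  constructor
  · intro hPB
    rcases Nat.eq_zero_or_pos k with rfl | hk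
    · exact good_zero g N
    rcases Nat.eq_zero_or_pos N with rfl | hN
    · exfalso
      obtain ⟨h, hh, -⟩ := (PB_iff' g k 0).1 hPB 0 (by simp)
      rw [Nat.zero_pow (by omega)] at hh
      omega
    intro c hc
    set b := g N + 1 with hb
    set L : List ℕ := (List.range (N * N)).map
      (fun i => if i / N < i % N then c (i / N) (i % N) else 0) with hL
    have hLlen : L.length = N * N := by simp [hL]
    have hLb : ∀ a ∈ L, a < b := by
      intro a ha
      rw [hL, List.mem_map] at ha
      obtain ⟨i, hi, rfl⟩ := ha
      split
      · next hlt =>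
        have h2 : i % N < N := Nat.mod_lt _ hN
        have h3 : i / N < N := lt_trans hlt h2
        have := (hc _ _ hlt).trans (hg h3.le)
        omega
      · omega
    set e := natOf b L with he
    have heb : e < b ^ (N * N) := by rw [← hLlen]; exact natOf_lt (by omega) L hLb
    have key : ∀ m n, m < n → n < N → colB g N e m n = c m n := by
      intro m n h1 h2
      have hm : m < N := lt_trans h1 h2
      have hidx : m * N + n < N * N := by
        calc m * N + n < m * N + N := by omega
          _ = (m + 1) * N := by ring
          _ ≤ N * N := Nat.mul_le_mul_right N hm
      have e1 : (m * N + n) / N = m := by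
        rw [mul_comm m N, Nat.mul_add_div hN, Nat.div_eq_of_lt h2, Nat.add_zero]
      have e2 : (m * N + n) % N = n := by
        rw [mul_comm m N, Nat.mul_add_mod, Nat.mod_eq_of_lt h2]
      have hd : e / b ^ (m * N + n) % b = L.getD (m * N + n) 0 :=
        natOf_digit (by omega) L hLb _
      have hg1 : L.getD (m * N + n) 0 = c m n := by
        have hlen : m * N + n < L.length := by omega
        rw [List.getD_eq_getElem L 0 hlen]
        simp only [hL, List.getElem_map, List.getElem_range]
        rw [e1, e2, if_pos h1]
      show min (e / b ^ (m * N + n) % b) (g m) = c m n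
      rw [hd, hg1]
      exact min_eq_left (hc m n h1)
    obtain ⟨h, hhk, hinc, hcol⟩ := (PB_iff' g k N).1 hPB e heb
    have hmono : ∀ i j, i < k → j < k → i < j → digB N h i < digB N h j :=
      fun i j _ hj hij => hinc j hj i hij
    have hltinv : ∀ i j, i < k → j < k → digB N h i < digB N h j → i < j := by
      intro i j hi hj hd
      by_contra hle
      push_neg at hle
      rcases Nat.lt_or_ge j i with h' | h'
      · exact absurd (hmono j i hj hi h') (by omega)
      · have : i = j := by omega
        subst this; omega
    refine ⟨(Finset.range k).image (fun i => digB N h i), ?_, ?_, ?_⟩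
    · intro x hx
      rw [Finset.mem_image] at hx
      obtain ⟨i, _, rfl⟩ := hx
      exact Finset.mem_range.2 (Nat.mod_lt _ hN)
    · rw [Finset.card_image_of_injOn, Finset.card_range]
      intro i hi j hj hij
      have hij' : digB N h i = digB N h j := hij
      simp only [Finset.coe_range, Set.mem_Iio] at hi hj
      by_contra hne
      rcases Nat.lt_or_ge i j with h' | h'
      · have := hmono i j hi hj h'
        omega
      · have h'' : j < i := by omega
        have := hmono j i hj hi h''
        omega
    · intro m n n' hm hn hn' l1 l2
      rw [Finset.mem_image] at hm hn hn'
      obtain ⟨i, hi, rfl⟩ := hm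
      obtain ⟨j, hj, rfl⟩ := hn
      obtain ⟨j', hj', rfl⟩ := hn'
      rw [Finset.mem_range] at hi hj hj'
      have hij := hltinv i j hi hj l1
      have hij' := hltinv i j' hi hj' l2
      have hc2 := hcol j hj j' hj' i hi hij hij'
      have d1 : digB N h j < N := Nat.mod_lt _ hN
      have d2 : digB N h j' < N := Nat.mod_lt _ hN
      rw [key _ _ l1 d1, key _ _ l2 d2] at hc2
      exact hc2
  · intro hGood
    rw [PB_iff']
    intro e _
    rcases Nat.eq_zero_or_pos k with rfl | hk
    · exact ⟨0, by simp, fun j hj => by omega, fun j hj => by omega⟩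
    obtain ⟨H, hsub, hcard, hmh⟩ := hGood (fun m n => colB g N e m n)
      (fun m n _ => min_le_right _ _)
    have hN : 0 < N := by
      obtain ⟨x, hx⟩ := Finset.card_pos.1 (show 0 < H.card by omega)
      exact lt_of_le_of_lt (Nat.zero_le x) (Finset.mem_range.1 (hsub hx))
    set L := Finset.sort H with hLs
    have hlen : L.length = k := by rw [hLs, Finset.length_sort, hcard]
    have hmem : ∀ a ∈ L, a < N := fun a ha =>
      Finset.mem_range.1 (hsub ((Finset.mem_sort _).1 ha))
    set h := natOf N L with hh
    have hhk : h < N ^ k := by rw [← hlen]; exact natOf_lt hN L hmem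
    have hdig : ∀ i (hi : i < k), digB N h i = L.get ⟨i, by omega⟩ := by
      intro i hi
      rw [digB, hh, natOf_digit hN L hmem i, List.getD_eq_getElem L 0 (by omega)]
      simp [List.get_eq_getElem]
    have hsorted := Finset.sortedLT_sort H
    have hstrict := hsorted.strictMono_get
    refine ⟨h, hhk, ?_, ?_⟩
    · intro j hj i hij
      rw [hdig i (by omega), hdig j hj]
      exact hstrict (Fin.mk_lt_mk.2 hij)
    · intro j hj j' hj' i hi hij hij'
      rw [hdig i hi, hdig j hj, hdig j' hj']
      apply hmh
      · exact (Finset.mem_sort _).1 (L.get_mem _)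
      · exact (Finset.mem_sort _).1 (L.get_mem _)
      · exact (Finset.mem_sort _).1 (L.get_mem _)
      · exact hstrict (Fin.mk_lt_mk.2 hij)
      · exact hstrict (Fin.mk_lt_mk.2 hij')

lemma cntB_eq (g : ℕ → ℕ) (hg : Monotone g) (ν : ℕ → ℕ)
    (hν : ∀ k, Good g k (ν k) ∧ ∀ N, Good g k N → ν k ≤ N) (k B : ℕ) (hB : Good g k B) :
    ν k = cntB g k (B + 1) := by
  have hiff : ∀ N, (PB g k N = true ↔ ν k ≤ N) := fun N =>
    (PB_iff g hg k N).trans ⟨fun h => (hν k).2 N h, fun h => good_mono h (hν k).1⟩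
  have hmin : ∀ M, cntB g k M = min M (ν k) := by
    intro M
    induction M with
    | zero => simp [cntB]
    | succ M ih =>
      by_cases hle : ν k ≤ M
      · have hT : PB g k M = true := (hiff M).2 hle
        show cntB g k M + cond (PB g k M) 0 1 = _
        rw [hT, ih]
        simp
        omega
      · have hF : PB g k M = false := by
          rcases Bool.eq_false_or_eq_true (PB g k M) with h | h
          · exact absurd ((hiff M).1 h) hle
          · exact h
        show cntB g k M + cond (PB g k M) 0 1 = _
        rw [hF, ih]
        simp
        omega
  have hνB : ν k ≤ B := (hν k).2 B hB
  rw [hmin]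
  omega

/-! ### Primitive recursiveness -/

lemma pow₂ : Primrec₂ (fun a b : ℕ => a ^ b) := by
  have h : Primrec₂ fun (a n : ℕ) =>
      n.rec (motive := fun _ => ℕ) 1 (fun _ IH => IH * a) :=
    Primrec.nat_rec (Primrec.const 1)
      ((Primrec.nat_mul.comp (Primrec.snd.comp Primrec.snd) Primrec.fst).to₂)
  have h' : Primrec fun z : ℕ × ℕ =>
      z.2.rec (motive := fun _ => ℕ) 1 (fun _ IH => IH * z.1) := h
  refine Primrec.of_eq h' fun z => ?_
  induction z.2 with
  | zero => simp
  | succ n ih => simpa [pow_succ] using congrArg (· * z.1) ih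

lemma primrec_all {α : Type} [Primcodable α] {f : α → ℕ} {q : α → ℕ → Bool}
    (hf : Primrec f) (hq : Primrec₂ q) :
    Primrec fun a => (List.range (f a)).all (q a) := by
  have h := Primrec.list_foldr (Primrec.list_range.comp hf) (Primrec.const true)
    ((Primrec.cond (hq.comp Primrec.fst (Primrec.fst.comp Primrec.snd))
      (Primrec.snd.comp Primrec.snd) (Primrec.const false)).to₂)
  refine h.of_eq fun a => ?_
  induction List.range (f a) with
  | nil => rfl
  | cons b l ih =>
    show cond (q a b) _ false = _
    rw [List.all_cons, ih]
    cases q a b <;> simp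

lemma primrec_any {α : Type} [Primcodable α] {f : α → ℕ} {q : α → ℕ → Bool}
    (hf : Primrec f) (hq : Primrec₂ q) :
    Primrec fun a => (List.range (f a)).any (q a) := by
  have h := Primrec.list_foldr (Primrec.list_range.comp hf) (Primrec.const false)
    ((Primrec.cond (hq.comp Primrec.fst (Primrec.fst.comp Primrec.snd))
      (Primrec.const true) (Primrec.snd.comp Primrec.snd)).to₂)
  refine h.of_eq fun a => ?_
  induction List.range (f a) with
  | nil => rfl
  | cons b l ih =>
    show cond (q a b) true _ = _
    rw [List.any_cons, ih]
    cases q a b <;> simp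

abbrev Z4 : Type := (ℕ × ℕ) × ℕ × ℕ

lemma digP : Primrec fun z : ℕ × ℕ × ℕ => digB z.1 z.2.1 z.2.2 :=
  Primrec.nat_mod.comp
    (Primrec.nat_div.comp (Primrec.fst.comp Primrec.snd)
      (pow₂.comp Primrec.fst (Primrec.snd.comp Primrec.snd)))
    Primrec.fst

lemma colP {g : ℕ → ℕ} (pg : Primrec g) :
    Primrec fun z : Z4 => colB g z.1.1 z.1.2 z.2.1 z.2.2 :=
  Primrec.nat_min.comp
    (Primrec.nat_mod.comp
      (Primrec.nat_div.comp (Primrec.snd.comp Primrec.fst)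
        (pow₂.comp (Primrec.succ.comp (pg.comp (Primrec.fst.comp Primrec.fst)))
          (Primrec.nat_add.comp
            (Primrec.nat_mul.comp (Primrec.fst.comp Primrec.snd)
              (Primrec.fst.comp Primrec.fst))
            (Primrec.snd.comp Primrec.snd))))
      (Primrec.succ.comp (pg.comp (Primrec.fst.comp Primrec.fst))))
    (pg.comp (Primrec.fst.comp Primrec.snd))

set_option maxHeartbeats 2000000 in
lemma chkP {g : ℕ → ℕ} (pg : Primrec g) :
    Primrec fun z : Z4 => chkB g z.1.1 z.1.2 z.2.1 z.2.2 := by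
  have hA : Primrec fun z : Z4 => (List.range z.1.1).all fun j =>
      (List.range j).all fun i => decide (digB z.1.2 z.2.2 i < digB z.1.2 z.2.2 j) := by
    have hbodyA : Primrec fun v : (Z4 × ℕ) × ℕ =>
        decide (digB v.1.1.1.2 v.1.1.2.2 v.2 < digB v.1.1.1.2 v.1.1.2.2 v.1.2) :=
      (Primrec.nat_lt.comp
        (digP.comp (Primrec.pair
          (Primrec.snd.comp (Primrec.fst.comp (Primrec.fst.comp Primrec.fst)))
          (Primrec.pair
            (Primrec.snd.comp (Primrec.snd.comp (Primrec.fst.comp Primrec.fst)))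
            Primrec.snd)))
        (digP.comp (Primrec.pair
          (Primrec.snd.comp (Primrec.fst.comp (Primrec.fst.comp Primrec.fst)))
          (Primrec.pair
            (Primrec.snd.comp (Primrec.snd.comp (Primrec.fst.comp Primrec.fst)))
            (Primrec.snd.comp Primrec.fst))))).decide
    have l2 : Primrec fun w : Z4 × ℕ => (List.range w.2).all fun i =>
        decide (digB w.1.1.2 w.1.2.2 i < digB w.1.1.2 w.1.2.2 w.2) :=
      primrec_all Primrec.snd hbodyA.to₂
    exact primrec_all (Primrec.fst.comp Primrec.fst) l2.to₂
  have hbody : Primrec fun v : ((Z4 × ℕ) × ℕ) × ℕ =>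
      decide (v.2 < v.1.1.2 → v.2 < v.1.2 →
        colB g v.1.1.1.1.2 v.1.1.1.2.1 (digB v.1.1.1.1.2 v.1.1.1.2.2 v.2)
            (digB v.1.1.1.1.2 v.1.1.1.2.2 v.1.1.2) =
        colB g v.1.1.1.1.2 v.1.1.1.2.1 (digB v.1.1.1.1.2 v.1.1.1.2.2 v.2)
            (digB v.1.1.1.1.2 v.1.1.1.2.2 v.1.2)) := by
    have pz : Primrec fun v : ((Z4 × ℕ) × ℕ) × ℕ => v.1.1.1 :=
      Primrec.fst.comp (Primrec.fst.comp Primrec.fst)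
    have pN := Primrec.snd.comp (Primrec.fst.comp pz)
    have pe := Primrec.fst.comp (Primrec.snd.comp pz)
    have ph := Primrec.snd.comp (Primrec.snd.comp pz)
    have pj : Primrec fun v : ((Z4 × ℕ) × ℕ) × ℕ => v.1.1.2 :=
      Primrec.snd.comp (Primrec.fst.comp Primrec.fst)
    have pj' : Primrec fun v : ((Z4 × ℕ) × ℕ) × ℕ => v.1.2 :=
      Primrec.snd.comp Primrec.fst
    have pi : Primrec fun v : ((Z4 × ℕ) × ℕ) × ℕ => v.2 := Primrec.snd
    have pdi := digP.comp (Primrec.pair pN (Primrec.pair ph pi))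
    have pdj := digP.comp (Primrec.pair pN (Primrec.pair ph pj))
    have pdj' := digP.comp (Primrec.pair pN (Primrec.pair ph pj'))
    have c1 : Primrec fun v : ((Z4 × ℕ) × ℕ) × ℕ => decide (v.2 < v.1.1.2) :=
      (Primrec.nat_lt.comp pi pj).decide
    have c2 : Primrec fun v : ((Z4 × ℕ) × ℕ) × ℕ => decide (v.2 < v.1.2) :=
      (Primrec.nat_lt.comp pi pj').decide
    have ceq := (Primrec.eq (α := ℕ)).comp
      ((colP pg).comp (Primrec.pair (Primrec.pair pN pe) (Primrec.pair pdi pdj)))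
      ((colP pg).comp (Primrec.pair (Primrec.pair pN pe) (Primrec.pair pdi pdj')))
    refine (Primrec.cond c1 (Primrec.cond c2 ceq.decide (Primrec.const true))
      (Primrec.const true)).of_eq fun v => ?_
    by_cases h1 : v.2 < v.1.1.2 <;> by_cases h2 : v.2 < v.1.2 <;> simp [h1, h2]
  have hB : Primrec fun z : Z4 => (List.range z.1.1).all fun j =>
      (List.range z.1.1).all fun j' => (List.range z.1.1).all fun i =>
        decide (i < j → i < j' →
          colB g z.1.2 z.2.1 (digB z.1.2 z.2.2 i) (digB z.1.2 z.2.2 j) =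
          colB g z.1.2 z.2.1 (digB z.1.2 z.2.2 i) (digB z.1.2 z.2.2 j')) := by
    have l3 : Primrec fun u : (Z4 × ℕ) × ℕ => (List.range u.1.1.1.1).all fun i =>
        decide (i < u.1.2 → i < u.2 →
          colB g u.1.1.1.2 u.1.1.2.1 (digB u.1.1.1.2 u.1.1.2.2 i)
            (digB u.1.1.1.2 u.1.1.2.2 u.1.2) =
          colB g u.1.1.1.2 u.1.1.2.1 (digB u.1.1.1.2 u.1.1.2.2 i)
            (digB u.1.1.1.2 u.1.1.2.2 u.2)) :=
      primrec_all (Primrec.fst.comp (Primrec.fst.comp (Primrec.fst.comp Primrec.fst)))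
        hbody.to₂
    have l2 : Primrec fun w : Z4 × ℕ => (List.range w.1.1.1).all fun j' =>
        (List.range w.1.1.1).all fun i =>
        decide (i < w.2 → i < j' →
          colB g w.1.1.2 w.1.2.1 (digB w.1.1.2 w.1.2.2 i) (digB w.1.1.2 w.1.2.2 w.2) =
          colB g w.1.1.2 w.1.2.1 (digB w.1.1.2 w.1.2.2 i) (digB w.1.1.2 w.1.2.2 j')) :=
      primrec_all (Primrec.fst.comp (Primrec.fst.comp Primrec.fst)) l3.to₂
    exact primrec_all (Primrec.fst.comp Primrec.fst) l2.to₂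
  exact ((Primrec.dom_bool₂ (· && ·)).comp hA hB).of_eq fun z => rfl

lemma PBP {g : ℕ → ℕ} (pg : Primrec g) : Primrec fun z : ℕ × ℕ => PB g z.1 z.2 := by
  have hq' : Primrec fun v : ((ℕ × ℕ) × ℕ) × ℕ => chkB g v.1.1.1 v.1.1.2 v.1.2 v.2 :=
    (chkP pg).comp (Primrec.pair
      (Primrec.pair (Primrec.fst.comp (Primrec.fst.comp Primrec.fst))
        (Primrec.snd.comp (Primrec.fst.comp Primrec.fst)))
      (Primrec.pair (Primrec.snd.comp Primrec.fst) Primrec.snd))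
  have l2 : Primrec fun w : (ℕ × ℕ) × ℕ =>
      (List.range (w.1.2 ^ w.1.1)).any fun h => chkB g w.1.1 w.1.2 w.2 h :=
    primrec_any (pow₂.comp (Primrec.snd.comp Primrec.fst) (Primrec.fst.comp Primrec.fst))
      hq'.to₂
  exact primrec_all
    (pow₂.comp (Primrec.succ.comp (pg.comp Primrec.snd))
      (Primrec.nat_mul.comp Primrec.snd Primrec.snd))
    l2.to₂

lemma cntP {g : ℕ → ℕ} (pg : Primrec g) : Primrec fun z : ℕ × ℕ => cntB g z.1 z.2 := by
  have hstep : Primrec₂ fun (k : ℕ) (q : ℕ × ℕ) => q.2 + cond (PB g k q.1) 0 1 :=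
    (Primrec.nat_add.comp (Primrec.snd.comp Primrec.snd)
      (Primrec.cond ((PBP pg).comp (Primrec.pair Primrec.fst (Primrec.fst.comp Primrec.snd)))
        (Primrec.const 0) (Primrec.const 1))).to₂
  have h : Primrec₂ fun (k M : ℕ) =>
      M.rec (motive := fun _ => ℕ) 0 (fun n IH => IH + cond (PB g k n) 0 1) :=
    Primrec.nat_rec (Primrec.const 0) hstep
  have h' : Primrec fun z : ℕ × ℕ =>
      z.2.rec (motive := fun _ => ℕ) 0 (fun n IH => IH + cond (PB g z.1 n) 0 1) := h
  refine h'.of_eq fun z => ?_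
  induction z.2 with
  | zero => rfl
  | succ M ih => show _ = cntB g z.1 (M + 1); rw [cntB, ← ih]

end Stmt5Aux

theorem stmt5 (g β : ℕ → ℕ) (hg : Monotone g) (hβ : Monotone β)
    (hgb : ∀ n, g n ≤ nroot (β n) n)
    (p : ℕ → ℕ) (hp : Nat.Primrec p) (hpinv : ∀ t, ∃ n, n ≤ p t ∧ t ≤ β n)
    (hgpr : Nat.Primrec g)
    (ν : ℕ → ℕ) (hν : ∀ k, Good g k (ν k) ∧ ∀ N, Good g k N → ν k ≤ N) :
    Nat.Primrec ν := by
  have pg : Primrec g := Primrec.nat_iff.2 hgpr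
  have pprim : Primrec p := Primrec.nat_iff.2 hp
  have hBf : Primrec fun k : ℕ => (p (2 * k) + 4 ^ k) ^ 2 + 1 :=
    Primrec.succ.comp (Stmt5Aux.pow₂.comp
      (Primrec.nat_add.comp
        (pprim.comp (Primrec.nat_mul.comp (Primrec.const 2) Primrec.id))
        (Stmt5Aux.pow₂.comp (Primrec.const 4) Primrec.id))
      (Primrec.const 2))
  have hcnt : Primrec fun k : ℕ => Stmt5Aux.cntB g k ((p (2 * k) + 4 ^ k) ^ 2 + 1) :=
    (Stmt5Aux.cntP pg).comp (Primrec.pair Primrec.id hBf)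
  have hν' : Primrec ν := hcnt.of_eq fun k =>
    (Stmt5Aux.cntB_eq g hg ν hν k _ (Stmt5Aux.good_bound g β hg hβ hgb p hpinv k)).symm
  exact Primrec.nat_iff.1 hν'
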